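/- Let f(q₂,q₃,q₄) = cos(q₂) + cos(q₃) + cos(q₄) + cos(q₂+q₃) + cos(q₃+q₄). The Hessian of f at the critical points (0,0,0), (0,0,π), (π,0,0) is nonsingular, while the Hessian of f at the critical point (π,0,π) is singular. -/

import Mathlib

open Real

private lemma hdsin1 (c x : ℝ) : HasDerivAt (fun t => Real.sin (t + c)) (Real.cos (x + c)) x := by
  simpa using ((hasDerivAt_id x).add_const c).sin

private lemma hdsin2 (c x : ℝ) : HasDerivAt (fun t => Real.sin (c + t)) (Real.cos (c + x)) x := by
  simpa using ((hasDerivAt_id x).const_add c).sin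

private lemma hdcos1 (c x : ℝ) : HasDerivAt (fun t => Real.cos (t + c)) (-Real.sin (x + c)) x := by
  simpa using ((hasDerivAt_id x).add_const c).cos

private lemma hdcos2 (c x : ℝ) : HasDerivAt (fun t => Real.cos (c + t)) (-Real.sin (c + x)) x := by
  simpa using ((hasDerivAt_id x).const_add c).cos

/-- Partial derivative of `F : ℝ³ → ℝ` in the `i`-th coordinate at `q`. -/
noncomputable def pderiv3 (F : (Fin 3 → ℝ) → ℝ) (i : Fin 3) (q : Fin 3 → ℝ) : ℝ :=
  deriv (fun t => F (Function.update q i t)) (q i)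

/-- Hessian matrix of `F : ℝ³ → ℝ` at `q`. -/
noncomputable def hess3 (F : (Fin 3 → ℝ) → ℝ) (q : Fin 3 → ℝ) :
    Matrix (Fin 3) (Fin 3) ℝ :=
  Matrix.of fun i j => pderiv3 (pderiv3 F j) i q

/-- For `f(q₂,q₃,q₄) = cos q₂ + cos q₃ + cos q₄ + cos(q₂+q₃) + cos(q₃+q₄)`,
the Hessian is nonsingular at the critical points `(0,0,0)`, `(0,0,π)`, `(π,0,0)`
and singular at the critical point `(π,0,π)`. -/
theorem stmt4 (F : (Fin 3 → ℝ) → ℝ)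
    (hF : ∀ q : Fin 3 → ℝ, F q =
      Real.cos (q 0) + Real.cos (q 1) + Real.cos (q 2) +
        Real.cos (q 0 + q 1) + Real.cos (q 1 + q 2)) :
    (hess3 F ![0, 0, 0]).det ≠ 0 ∧
    (hess3 F ![0, 0, π]).det ≠ 0 ∧
    (hess3 F ![π, 0, 0]).det ≠ 0 ∧
    (hess3 F ![π, 0, π]).det = 0 := by
  have g0 : pderiv3 F 0 = fun q => -Real.sin (q 0) - Real.sin (q 0 + q 1) := by
    funext q
    have e : (fun t => F (Function.update q 0 t)) =
        fun t => Real.cos t + Real.cos (q 1) + Real.cos (q 2)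
          + Real.cos (t + q 1) + Real.cos (q 1 + q 2) := by
      funext t; rw [hF]; simp [Function.update_apply]
    have h : HasDerivAt (fun t => Real.cos t + Real.cos (q 1) + Real.cos (q 2)
          + Real.cos (t + q 1) + Real.cos (q 1 + q 2))
        (-Real.sin (q 0) + -Real.sin (q 0 + q 1)) (q 0) :=
      ((((Real.hasDerivAt_cos (q 0)).add_const (Real.cos (q 1))).add_const
        (Real.cos (q 2))).add (hdcos1 (q 1) (q 0))).add_const (Real.cos (q 1 + q 2))
    rw [pderiv3, e, h.deriv]; ring
  have g1 : pderiv3 F 1 = fun q =>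
      -Real.sin (q 1) - Real.sin (q 0 + q 1) - Real.sin (q 1 + q 2) := by
    funext q
    have e : (fun t => F (Function.update q 1 t)) =
        fun t => Real.cos (q 0) + Real.cos t + Real.cos (q 2)
          + Real.cos (q 0 + t) + Real.cos (t + q 2) := by
      funext t; rw [hF]; simp [Function.update_apply]
    have h : HasDerivAt (fun t => Real.cos (q 0) + Real.cos t + Real.cos (q 2)
          + Real.cos (q 0 + t) + Real.cos (t + q 2))
        (0 + -Real.sin (q 1) + -Real.sin (q 0 + q 1) + -Real.sin (q 1 + q 2)) (q 1) :=
      ((((hasDerivAt_const (q 1) (Real.cos (q 0))).add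
        (Real.hasDerivAt_cos (q 1))).add_const (Real.cos (q 2))).add
        (hdcos2 (q 0) (q 1))).add (hdcos1 (q 2) (q 1))
    rw [pderiv3, e, h.deriv]; ring
  have g2 : pderiv3 F 2 = fun q => -Real.sin (q 2) - Real.sin (q 1 + q 2) := by
    funext q
    have e : (fun t => F (Function.update q 2 t)) =
        fun t => Real.cos (q 0) + Real.cos (q 1) + Real.cos t
          + Real.cos (q 0 + q 1) + Real.cos (q 1 + t) := by
      funext t; rw [hF]; simp [Function.update_apply]
    have h : HasDerivAt (fun t => Real.cos (q 0) + Real.cos (q 1) + Real.cos t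
          + Real.cos (q 0 + q 1) + Real.cos (q 1 + t))
        (0 + -Real.sin (q 2) + -Real.sin (q 1 + q 2)) (q 2) :=
      ((((hasDerivAt_const (q 2) (Real.cos (q 0))).add_const
        (Real.cos (q 1))).add (Real.hasDerivAt_cos (q 2))).add_const
        (Real.cos (q 0 + q 1))).add (hdcos2 (q 1) (q 2))
    rw [pderiv3, e, h.deriv]; ring
  -- second derivatives: hIJ = entry (row I, column J) = pderiv3 (pderiv3 F J) I
  have h00 : ∀ q : Fin 3 → ℝ, pderiv3 (pderiv3 F 0) 0 q
      = -Real.cos (q 0) - Real.cos (q 0 + q 1) := by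
    intro q; rw [g0]
    have e : (fun t => (fun q : Fin 3 → ℝ => -Real.sin (q 0) - Real.sin (q 0 + q 1))
        (Function.update q 0 t)) = fun t => -Real.sin t - Real.sin (t + q 1) := by
      funext t; simp [Function.update_apply]
    have h : HasDerivAt (fun t => -Real.sin t - Real.sin (t + q 1))
        (-Real.cos (q 0) - Real.cos (q 0 + q 1)) (q 0) :=
      ((Real.hasDerivAt_sin (q 0)).neg).sub (hdsin1 (q 1) (q 0))
    rw [pderiv3, e, h.deriv]
  have h10 : ∀ q : Fin 3 → ℝ, pderiv3 (pderiv3 F 0) 1 q = -Real.cos (q 0 + q 1) := by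
    intro q; rw [g0]
    have e : (fun t => (fun q : Fin 3 → ℝ => -Real.sin (q 0) - Real.sin (q 0 + q 1))
        (Function.update q 1 t)) = fun t => -Real.sin (q 0) - Real.sin (q 0 + t) := by
      funext t; simp [Function.update_apply]
    have h : HasDerivAt (fun t => -Real.sin (q 0) - Real.sin (q 0 + t))
        (0 - Real.cos (q 0 + q 1)) (q 1) :=
      (hasDerivAt_const (q 1) (-Real.sin (q 0))).sub (hdsin2 (q 0) (q 1))
    rw [pderiv3, e, h.deriv]; ring
  have h20 : ∀ q : Fin 3 → ℝ, pderiv3 (pderiv3 F 0) 2 q = 0 := by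
    intro q; rw [g0]
    have e : (fun t => (fun q : Fin 3 → ℝ => -Real.sin (q 0) - Real.sin (q 0 + q 1))
        (Function.update q 2 t))
        = fun _ => -Real.sin (q 0) - Real.sin (q 0 + q 1) := by
      funext t; simp [Function.update_apply]
    rw [pderiv3, e, deriv_const]
  have h01 : ∀ q : Fin 3 → ℝ, pderiv3 (pderiv3 F 1) 0 q = -Real.cos (q 0 + q 1) := by
    intro q; rw [g1]
    have e : (fun t => (fun q : Fin 3 → ℝ =>
        -Real.sin (q 1) - Real.sin (q 0 + q 1) - Real.sin (q 1 + q 2))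
        (Function.update q 0 t))
        = fun t => -Real.sin (q 1) - Real.sin (t + q 1) - Real.sin (q 1 + q 2) := by
      funext t; simp [Function.update_apply]
    have h : HasDerivAt (fun t => -Real.sin (q 1) - Real.sin (t + q 1) - Real.sin (q 1 + q 2))
        (0 - Real.cos (q 0 + q 1)) (q 0) :=
      ((hasDerivAt_const (q 0) (-Real.sin (q 1))).sub (hdsin1 (q 1) (q 0))).sub_const
        (Real.sin (q 1 + q 2))
    rw [pderiv3, e, h.deriv]; ring
  have h11 : ∀ q : Fin 3 → ℝ, pderiv3 (pderiv3 F 1) 1 q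
      = -Real.cos (q 1) - Real.cos (q 0 + q 1) - Real.cos (q 1 + q 2) := by
    intro q; rw [g1]
    have e : (fun t => (fun q : Fin 3 → ℝ =>
        -Real.sin (q 1) - Real.sin (q 0 + q 1) - Real.sin (q 1 + q 2))
        (Function.update q 1 t))
        = fun t => -Real.sin t - Real.sin (q 0 + t) - Real.sin (t + q 2) := by
      funext t; simp [Function.update_apply]
    have h : HasDerivAt (fun t => -Real.sin t - Real.sin (q 0 + t) - Real.sin (t + q 2))
        (-Real.cos (q 1) - Real.cos (q 0 + q 1) - Real.cos (q 1 + q 2)) (q 1) :=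
      (((Real.hasDerivAt_sin (q 1)).neg).sub (hdsin2 (q 0) (q 1))).sub (hdsin1 (q 2) (q 1))
    rw [pderiv3, e, h.deriv]
  have h21 : ∀ q : Fin 3 → ℝ, pderiv3 (pderiv3 F 1) 2 q = -Real.cos (q 1 + q 2) := by
    intro q; rw [g1]
    have e : (fun t => (fun q : Fin 3 → ℝ =>
        -Real.sin (q 1) - Real.sin (q 0 + q 1) - Real.sin (q 1 + q 2))
        (Function.update q 2 t))
        = fun t => -Real.sin (q 1) - Real.sin (q 0 + q 1) - Real.sin (q 1 + t) := by
      funext t; simp [Function.update_apply]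
    have h : HasDerivAt
        (fun t => -Real.sin (q 1) - Real.sin (q 0 + q 1) - Real.sin (q 1 + t))
        (0 - Real.cos (q 1 + q 2)) (q 2) :=
      (hasDerivAt_const (q 2) (-Real.sin (q 1) - Real.sin (q 0 + q 1))).sub
        (hdsin2 (q 1) (q 2))
    rw [pderiv3, e, h.deriv]; ring
  have h02 : ∀ q : Fin 3 → ℝ, pderiv3 (pderiv3 F 2) 0 q = 0 := by
    intro q; rw [g2]
    have e : (fun t => (fun q : Fin 3 → ℝ => -Real.sin (q 2) - Real.sin (q 1 + q 2))
        (Function.update q 0 t))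
        = fun _ => -Real.sin (q 2) - Real.sin (q 1 + q 2) := by
      funext t; simp [Function.update_apply]
    rw [pderiv3, e, deriv_const]
  have h12 : ∀ q : Fin 3 → ℝ, pderiv3 (pderiv3 F 2) 1 q = -Real.cos (q 1 + q 2) := by
    intro q; rw [g2]
    have e : (fun t => (fun q : Fin 3 → ℝ => -Real.sin (q 2) - Real.sin (q 1 + q 2))
        (Function.update q 1 t)) = fun t => -Real.sin (q 2) - Real.sin (t + q 2) := by
      funext t; simp [Function.update_apply]
    have h : HasDerivAt (fun t => -Real.sin (q 2) - Real.sin (t + q 2))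
        (0 - Real.cos (q 1 + q 2)) (q 1) :=
      (hasDerivAt_const (q 1) (-Real.sin (q 2))).sub (hdsin1 (q 2) (q 1))
    rw [pderiv3, e, h.deriv]; ring
  have h22 : ∀ q : Fin 3 → ℝ, pderiv3 (pderiv3 F 2) 2 q
      = -Real.cos (q 2) - Real.cos (q 1 + q 2) := by
    intro q; rw [g2]
    have e : (fun t => (fun q : Fin 3 → ℝ => -Real.sin (q 2) - Real.sin (q 1 + q 2))
        (Function.update q 2 t)) = fun t => -Real.sin t - Real.sin (q 1 + t) := by
      funext t; simp [Function.update_apply]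
    have h : HasDerivAt (fun t => -Real.sin t - Real.sin (q 1 + t))
        (-Real.cos (q 2) - Real.cos (q 1 + q 2)) (q 2) :=
      ((Real.hasDerivAt_sin (q 2)).neg).sub (hdsin2 (q 1) (q 2))
    rw [pderiv3, e, h.deriv]
  refine ⟨?_, ?_, ?_, ?_⟩ <;>
  · simp only [Matrix.det_fin_three, hess3, Matrix.of_apply,
      h00, h01, h02, h10, h11, h12, h20, h21, h22]
    norm_num [Real.cos_pi, Matrix.cons_val_two, Matrix.tail_cons, Matrix.head_cons]
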